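/- Let y_m > 0 and let f : ℝ → ℝ be continuous and strictly positive on [0, y_m]. Set F(y) = ∫₀^y f(s) ds and h(y) = F(y_m) − F(y). Then for every continuous q : (0, y_m) → ℝ with q > 0, ∫₀^{y_m} q(s) ds = 1, and ∫₀^{y_m} h(s) q(s)³ ds < ∞, one has ∫₀^{y_m} h(s) q(s)³ ds ≥ (∫₀^{y_m} h(s)^{-1/2} ds)^{-2}. -/

import Mathlib

open MeasureTheory intervalIntegral Set

/-- The reformulated variational principle (2.12b): for every admissible `q`
(continuous, positive, with `∫₀^{y_m} q = 1`), one has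
`∫₀^{y_m} h q³ ≥ (∫₀^{y_m} h^{-1/2})^{-2}`. -/
theorem stmt_7 (y_m : ℝ) (hym : 0 < y_m) (f : ℝ → ℝ)
    (hf_cont : ContinuousOn f (Set.Icc 0 y_m))
    (hf_pos : ∀ y ∈ Set.Icc 0 y_m, 0 < f y)
    (F h : ℝ → ℝ)
    (hF : ∀ y, F y = ∫ s in (0:ℝ)..y, f s)
    (hh : ∀ y, h y = F y_m - F y)
    (q : ℝ → ℝ)
    (hq_cont : ContinuousOn q (Set.Ioo 0 y_m))
    (hq_pos : ∀ s ∈ Set.Ioo 0 y_m, 0 < q s)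
    (hq_norm : (∫ s in (0:ℝ)..y_m, q s) = 1)
    (hint : IntervalIntegrable (fun s => h s * (q s) ^ 3) volume 0 y_m) :
    (∫ s in (0:ℝ)..y_m, h s * (q s) ^ 3)
      ≥ ((∫ s in (0:ℝ)..y_m, (h s) ^ (-(1/2) : ℝ)) ^ 2)⁻¹ := by
  have hle : (0:ℝ) ≤ y_m := hym.le
  -- integrability of f on subintervals
  have hf_ii0 : ∀ y ∈ Icc (0:ℝ) y_m, IntervalIntegrable f volume 0 y := by
    intro y hy
    apply ContinuousOn.intervalIntegrable
    apply hf_cont.mono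
    rw [uIcc_of_le hy.1]
    exact Icc_subset_Icc le_rfl hy.2
  have hf_ii : ∀ y ∈ Icc (0:ℝ) y_m, IntervalIntegrable f volume y y_m := by
    intro y hy
    apply ContinuousOn.intervalIntegrable
    apply hf_cont.mono
    rw [uIcc_of_le hy.2]
    exact Icc_subset_Icc hy.1 le_rfl
  have hkey : ∀ y ∈ Icc (0:ℝ) y_m, h y = ∫ s in y..y_m, f s := by
    intro y hy
    rw [hh, hF, hF]
    exact intervalIntegral.integral_interval_sub_left
      (hf_ii0 y_m (right_mem_Icc.2 hle)) (hf_ii0 y hy)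
  have h_pos : ∀ y ∈ Ico (0:ℝ) y_m, 0 < h y := by
    intro y hy
    rw [hkey y ⟨hy.1, hy.2.le⟩]
    exact intervalIntegral_pos_of_pos_on (hf_ii y ⟨hy.1, hy.2.le⟩)
      (fun x hx => hf_pos x ⟨le_trans hy.1 hx.1.le, hx.2.le⟩) hy.2
  -- continuity of h on Icc
  have hF_cont : ContinuousOn F (Icc 0 y_m) := by
    have hFi : IntegrableOn f (uIcc (0:ℝ) y_m) volume := by
      rw [uIcc_of_le hle]
      exact hf_cont.integrableOn_Icc
    have := intervalIntegral.continuousOn_primitive_interval (a := (0:ℝ)) (b := y_m)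
      (μ := volume) hFi
    rw [uIcc_of_le hle] at this
    exact this.congr fun y _ => hF y
  have hh_cont : ContinuousOn h (Icc 0 y_m) :=
    (continuousOn_const.sub hF_cont).congr fun y _ => hh y
  -- measure-theoretic setup
  set μ : Measure ℝ := volume.restrict (Ioc 0 y_m) with hμ
  have μeq : μ = volume.restrict (Ioo 0 y_m) :=
    (Measure.restrict_congr_set Ioo_ae_eq_Ioc).symm
  have hmh : AEMeasurable h μ :=
    (hh_cont.aemeasurable measurableSet_Icc).mono_measure
      (Measure.restrict_mono Ioc_subset_Icc_self le_rfl)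
  have hmq : AEMeasurable q μ := by
    rw [μeq]; exact hq_cont.aemeasurable measurableSet_Ioo
  have hmem : ∀ᵐ s ∂μ, s ∈ Ioo 0 y_m := by
    rw [μeq]; exact ae_restrict_mem measurableSet_Ioo
  have hq_nn : 0 ≤ᵐ[μ] q := by
    filter_upwards [hmem] with s hs; exact (hq_pos s hs).le
  have hhq_nn : 0 ≤ᵐ[μ] fun s => h s * q s ^ 3 := by
    filter_upwards [hmem] with s hs
    exact mul_nonneg (h_pos s ⟨hs.1.le, hs.2⟩).le (pow_nonneg (hq_pos s hs).le 3)
  have hB_nn : 0 ≤ᵐ[μ] fun s => (h s) ^ (-(1/2) : ℝ) := by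
    filter_upwards [hmem] with s hs
    exact Real.rpow_nonneg (h_pos s ⟨hs.1.le, hs.2⟩).le _
  -- q is integrable (otherwise its integral would be 0, not 1)
  have hqi : Integrable q μ := by
    by_contra hc
    rw [intervalIntegral.integral_of_le hle, ← hμ, MeasureTheory.integral_undef hc]
      at hq_norm
    norm_num at hq_norm
  have hLHS_nn : 0 ≤ ∫ s in (0:ℝ)..y_m, h s * q s ^ 3 := by
    rw [intervalIntegral.integral_of_le hle, ← hμ]
    exact MeasureTheory.integral_nonneg_of_ae hhq_nn
  -- split on integrability of h^{-1/2}
  by_cases hBi : Integrable (fun s => (h s) ^ (-(1/2) : ℝ)) μ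
  · -- main case: Hölder's inequality
    have hAint : Integrable (fun s => h s * q s ^ 3) μ :=
      (intervalIntegrable_iff_integrableOn_Ioc_of_le hle).1 hint
    set A : ℝ := ∫ s, h s * q s ^ 3 ∂μ with hA'
    set B : ℝ := ∫ s, (h s) ^ (-(1/2) : ℝ) ∂μ with hB'
    have hA_nn : 0 ≤ A := MeasureTheory.integral_nonneg_of_ae hhq_nn
    have hB_nn' : 0 ≤ B := MeasureTheory.integral_nonneg_of_ae hB_nn
    -- ENNReal-valued functions for Hölder
    set H : ℝ → ENNReal := fun s => ENNReal.ofReal (h s) with hH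
    set G1 : ℝ → ENNReal := fun s => H s ^ (1/3 : ℝ) * ENNReal.ofReal (q s) with hG1
    set G2 : ℝ → ENNReal := fun s => H s ^ (-(1/3) : ℝ) with hG2
    have hmH : AEMeasurable H μ := hmh.ennreal_ofReal
    have hmG1 : AEMeasurable G1 μ := (hmH.pow aemeasurable_const).mul hmq.ennreal_ofReal
    have hmG2 : AEMeasurable G2 μ := hmH.pow aemeasurable_const
    have hpq : Real.HolderConjugate 3 (3/2) := ⟨by norm_num, by norm_num, by norm_num⟩
    have holder := ENNReal.lintegral_mul_le_Lp_mul_Lq μ hpq hmG1 hmG2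
    -- identify the three lintegrals
    have e1 : ∫⁻ s, (G1 * G2) s ∂μ = 1 := by
      have heq : (fun s => (G1 * G2) s) =ᵐ[μ] fun s => ENNReal.ofReal (q s) := by
        filter_upwards [hmem] with s hs
        have hhs : 0 < h s := h_pos s ⟨hs.1.le, hs.2⟩
        have hH0 : H s ≠ 0 := by
          simp only [hH, ne_eq, ENNReal.ofReal_eq_zero, not_le]; exact hhs
        have hHt : H s ≠ ⊤ := ENNReal.ofReal_ne_top
        simp only [Pi.mul_apply, hG1, hG2]
        rw [mul_right_comm, ← ENNReal.rpow_add _ _ hH0 hHt]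
        norm_num
      rw [lintegral_congr_ae heq, ← MeasureTheory.ofReal_integral_eq_lintegral_ofReal hqi hq_nn]
      have : (∫ s, q s ∂μ) = 1 := by
        rw [hμ, ← intervalIntegral.integral_of_le hle]; exact hq_norm
      rw [this, ENNReal.ofReal_one]
    have e2 : ∫⁻ s, G1 s ^ (3:ℝ) ∂μ = ENNReal.ofReal A := by
      have heq : (fun s => G1 s ^ (3:ℝ)) =ᵐ[μ] fun s => ENNReal.ofReal (h s * q s ^ 3) := by
        filter_upwards [hmem] with s hs
        have hhs : 0 ≤ h s := (h_pos s ⟨hs.1.le, hs.2⟩).le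
        have hqs : 0 ≤ q s := (hq_pos s hs).le
        simp only [hG1, hH]
        rw [ENNReal.mul_rpow_of_nonneg _ _ (by norm_num : (0:ℝ) ≤ 3),
          ← ENNReal.rpow_mul]
        norm_num
        rw [ENNReal.ofReal_mul hhs, ENNReal.ofReal_pow hqs]
      rw [lintegral_congr_ae heq,
        ← MeasureTheory.ofReal_integral_eq_lintegral_ofReal hAint hhq_nn]
    have e3 : ∫⁻ s, G2 s ^ (3/2:ℝ) ∂μ = ENNReal.ofReal B := by
      have heq : (fun s => G2 s ^ (3/2:ℝ)) =ᵐ[μ] fun s => ENNReal.ofReal ((h s) ^ (-(1/2):ℝ)) := by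
        filter_upwards [hmem] with s hs
        have hhs : 0 < h s := h_pos s ⟨hs.1.le, hs.2⟩
        simp only [hG2, hH]
        rw [← ENNReal.rpow_mul, ENNReal.ofReal_rpow_of_pos hhs]
        norm_num
      rw [lintegral_congr_ae heq,
        ← MeasureTheory.ofReal_integral_eq_lintegral_ofReal hBi hB_nn]
    rw [e1, e2, e3] at holder
    -- 1 ≤ (ofReal A)^(1/3) * (ofReal B)^(2/3); cube both sides
    have h3 := ENNReal.rpow_le_rpow holder (by norm_num : (0:ℝ) ≤ 3)
    rw [ENNReal.one_rpow, ENNReal.mul_rpow_of_nonneg _ _ (by norm_num : (0:ℝ) ≤ 3),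
      ← ENNReal.rpow_mul, ← ENNReal.rpow_mul] at h3
    norm_num at h3
    -- now h3 : 1 ≤ ofReal A * (ofReal B) ^ 2 (with real exponent 2)
    have h4 : (1:ENNReal) ≤ ENNReal.ofReal (A * B ^ 2) := by
      rw [ENNReal.ofReal_mul hA_nn, ENNReal.ofReal_pow hB_nn']
      exact h3
    have h5 : (1:ℝ) ≤ A * B ^ 2 := by
      have := ENNReal.one_le_ofReal.mp h4
      linarith
    -- conclude
    have hB2pos : 0 < B ^ 2 := by
      rcases lt_or_eq_of_le hB_nn' with hB | hB
      · positivity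
      · exfalso; rw [← hB] at h5; norm_num at h5
    rw [ge_iff_le, intervalIntegral.integral_of_le hle, intervalIntegral.integral_of_le hle,
      ← hμ, ← hA', ← hB']
    rw [inv_le_iff_one_le_mul₀ hB2pos]
    linarith [h5]
  · -- degenerate case: h^{-1/2} is not integrable, so its Bochner integral is 0
    have hB0 : (∫ s in (0:ℝ)..y_m, (h s) ^ (-(1/2) : ℝ)) = 0 := by
      rw [intervalIntegral.integral_of_le hle, ← hμ, MeasureTheory.integral_undef hBi]
    rw [hB0]
    norm_num
    exact hLHS_nn
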